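/- Let 𝒜 be a nontrivial abelian group, V a type, and G a simple graph on V. Define the boundary operator ∂ sending a finitely supported function q : V × V →₀ 𝒜 to the finitely supported function ∂q : V →₀ 𝒜 with (∂q)(v) = Σ_u q(u, v) − Σ_w q(v, w). Suppose q : V × V →₀ 𝒜 is supported on adjacent pairs (i.e. G.Adj u v for every (u, v) in supp q), and suppose ∂q = Finsupp.single y a − Finsupp.single x a for some a ≠ 0 and x ≠ y. Then x and y are reachable from each other in G, and the Hamming norm of q (the cardinality of its support) is at least the graph distance G.dist x y. -/

import Mathlib

/-- The boundary of a `1`-chain `q : V × V →₀ 𝒜`: the `0`-chain whose value at `v` is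
`Σ_u q(u, v) − Σ_w q(v, w)`. -/
noncomputable def graphBoundary {𝒜 V : Type*} [AddCommGroup 𝒜] (q : V × V →₀ 𝒜) :
    V →₀ 𝒜 :=
  q.sum fun p a => Finsupp.single p.2 a - Finsupp.single p.1 a

/-- If a `1`-chain `q` supported on adjacent pairs of a simple graph `G` has boundary
`single y a − single x a` with `a ≠ 0` and `x ≠ y`, then `x` and `y` are reachable from
each other in `G` and the Hamming norm of `q` is at least the graph distance `G.dist x y`. -/
theorem dist_le_hamming_norm_of_boundary {𝒜 V : Type*} [AddCommGroup 𝒜] [Nontrivial 𝒜]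
    (G : SimpleGraph V) (q : V × V →₀ 𝒜)
    (hadj : ∀ p ∈ q.support, G.Adj p.1 p.2)
    (x y : V) (a : 𝒜) (ha : a ≠ 0) (hxy : x ≠ y)
    (hbd : graphBoundary q = Finsupp.single y a - Finsupp.single x a) :
    G.Reachable x y ∧ G.dist x y ≤ q.support.card := by
  classical
  set H : SimpleGraph V :=
    { Adj := fun u v => (u, v) ∈ q.support ∨ (v, u) ∈ q.support
      symm := ⟨fun u v h => h.symm⟩
      loopless := ⟨fun u h => by
        rcases h with h | h <;> exact (G.loopless.irrefl u (hadj _ h))⟩ } with hH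
  have hHG : H ≤ G := by
    intro u v h
    rcases h with h | h
    · exact hadj _ h
    · exact (hadj _ h).symm
  have hreach : H.Reachable x y := by
    by_contra hy
    set T : Finset V := (q.support.image Prod.fst ∪ q.support.image Prod.snd) ∪ {x, y}
      with hT
    set F : Finset V := T.filter (fun v => H.Reachable x v) with hF
    have hmem : ∀ p ∈ q.support, (p.1 ∈ F ↔ p.2 ∈ F) := by
      intro p hp
      have h1 : p.1 ∈ T := by
        simp only [hT, Finset.mem_union, Finset.mem_image]
        exact Or.inl (Or.inl ⟨p, hp, rfl⟩)
      have h2 : p.2 ∈ T := by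
        simp only [hT, Finset.mem_union, Finset.mem_image]
        exact Or.inl (Or.inr ⟨p, hp, rfl⟩)
      have hadj' : H.Adj p.1 p.2 := Or.inl hp
      simp only [hF, Finset.mem_filter]
      constructor
      · rintro ⟨-, hr⟩; exact ⟨h2, hr.trans hadj'.reachable⟩
      · rintro ⟨-, hr⟩; exact ⟨h1, hr.trans hadj'.symm.reachable⟩
    have hsum0 : ∑ v ∈ F, graphBoundary q v = 0 := by
      have key : ∀ v, graphBoundary q v =
          ∑ p ∈ q.support,
            ((Finsupp.single p.2 (q p) - Finsupp.single p.1 (q p)) v) := by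
        intro v
        rw [graphBoundary, Finsupp.sum_apply]
        rfl
      rw [Finset.sum_congr rfl (fun v _ => key v), Finset.sum_comm]
      refine Finset.sum_eq_zero fun p hp => ?_
      simp only [Finsupp.sub_apply, Finsupp.single_apply]
      rw [Finset.sum_sub_distrib, Finset.sum_ite_eq, Finset.sum_ite_eq]
      by_cases h1 : p.1 ∈ F
      · rw [if_pos h1, if_pos ((hmem p hp).1 h1), sub_self]
      · rw [if_neg h1, if_neg (fun h2 => h1 ((hmem p hp).2 h2)), sub_self]
    have hxF : x ∈ F := by
      refine Finset.mem_filter.mpr ⟨?_, SimpleGraph.Reachable.refl x⟩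
      simp [hT]
    have hyF : y ∉ F := fun h => hy (Finset.mem_filter.mp h).2
    rw [hbd] at hsum0
    simp only [Finsupp.sub_apply, Finsupp.single_apply] at hsum0
    rw [Finset.sum_sub_distrib, Finset.sum_ite_eq, Finset.sum_ite_eq, if_neg hyF,
      if_pos hxF, zero_sub, neg_eq_zero] at hsum0
    exact ha hsum0
  refine ⟨hreach.mono hHG, ?_⟩
  obtain ⟨w⟩ := hreach
  set p := w.toPath with hp
  have hdist : G.dist x y ≤ p.1.length := by
    have := SimpleGraph.dist_le (p.1.mapLe hHG)
    simpa [SimpleGraph.Walk.mapLe, SimpleGraph.Walk.length_map] using this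
  refine hdist.trans ?_
  have hlen : p.1.length = p.1.edges.toFinset.card := by
    rw [List.toFinset_card_of_nodup p.2.edges_nodup, SimpleGraph.Walk.length_edges]
  rw [hlen]
  have hsub : p.1.edges.toFinset ⊆ q.support.image (fun r => s(r.1, r.2)) := by
    intro e he
    rw [List.mem_toFinset] at he
    induction e using Sym2.inductionOn with
    | hf u v =>
      have : H.Adj u v := p.1.adj_of_mem_edges he
      rcases this with h | h
      · exact Finset.mem_image.mpr ⟨(u, v), h, rfl⟩
      · exact Finset.mem_image.mpr ⟨(v, u), h, Sym2.eq_swap⟩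
  exact (Finset.card_le_card hsub).trans (Finset.card_image_le)
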